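/- Let d ≥ 1 be an integer and let V_d be the volume of the ball of radius 1 in ℝ^d. Let α ∈ (0, 1/2) and let n be an integer with log(2/(3α)) ≤ n, and set r := (−log(3α/2)/(2 V_d n))^{1/d}. If X_1,…,X_n are independent uniform random points in [0,1]^d, then the probability that no index j ∈ {2,…,n} satisfies ‖X_j − X_1‖ ≤ r (Euclidean norm) is at least 3α/2. -/

import Mathlib

open MeasureTheory Metric Set

/-- The uniform probability measure on `n` independent points in `[0,1]^d`. -/
noncomputable def unifCube (d n : ℕ) :
    Measure (Fin n → EuclideanSpace ℝ (Fin d)) :=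
  (volume : Measure (Fin n → EuclideanSpace ℝ (Fin d))).restrict
    {x | ∀ i, ∀ k, x i k ∈ Set.Icc (0 : ℝ) 1}

/-- The volume of the Euclidean unit ball in `ℝ^d`. -/
noncomputable def unitBallVol (d : ℕ) : ℝ :=
  (volume (Metric.closedBall (0 : EuclideanSpace ℝ (Fin d)) 1)).toReal

/-- Restricting a product measure to a box is the product of restrictions. -/
lemma pi_restrict_eq {ι : Type*} [Fintype ι] {α : ι → Type*} [∀ i, MeasurableSpace (α i)]
    (μ : ∀ i, Measure (α i)) [∀ i, SigmaFinite (μ i)] (s : ∀ i, Set (α i))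
    (hs : ∀ i, MeasurableSet (s i)) :
    (Measure.pi μ).restrict (Set.pi Set.univ s) = Measure.pi (fun i => (μ i).restrict (s i)) := by
  refine (Measure.pi_eq fun t ht => ?_).symm
  rw [Measure.restrict_apply (MeasurableSet.univ_pi ht), ← Set.pi_inter_distrib,
    Measure.pi_pi]
  exact Finset.prod_congr rfl fun i _ => (Measure.restrict_apply (ht i)).symm

lemma exp_neg_le_pow (t : ℝ) (ht : 0 < t) (n : ℕ) (hn0 : 0 < n) (htn : t ≤ n)
    (m : ℕ) (hm : m ≤ n) : Real.exp (-t) ≤ (1 - t / (2 * n)) ^ m := by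
  have hn' : (0 : ℝ) < n := Nat.cast_pos.mpr hn0
  set x := t / (2 * n) with hxdef
  have hx0 : 0 < x := by positivity
  have hx : x ≤ 1 / 2 := by
    rw [hxdef, div_le_div_iff₀ (by positivity) two_pos]
    nlinarith
  have step : Real.exp (-(2 * x)) ≤ 1 - x := by
    have h1 : 1 + 2 * x ≤ Real.exp (2 * x) := by
      have := Real.add_one_le_exp (2 * x); linarith
    have hmul : Real.exp (-(2 * x)) * Real.exp (2 * x) = 1 := by
      rw [← Real.exp_add]; simp
    nlinarith [Real.exp_pos (-(2 * x)), Real.exp_pos (2 * x)]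
  have h2 : Real.exp (-t) ≤ Real.exp (-(2 * x)) ^ m := by
    rw [← Real.exp_nat_mul, Real.exp_le_exp]
    have : (m : ℝ) * (2 * x) ≤ t := by
      have hmn : (m : ℝ) ≤ n := Nat.cast_le.mpr hm
      have key : (m : ℝ) * (2 * x) * n = t * m := by rw [hxdef]; field_simp
      nlinarith [key, hn', mul_le_mul_of_nonneg_left hmn ht.le]
    linarith
  exact h2.trans (pow_le_pow_left₀ (Real.exp_pos _).le step m)

lemma cube_vol (d : ℕ) :
    volume {y : EuclideanSpace ℝ (Fin d) | ∀ k, y k ∈ Set.Icc (0:ℝ) 1} = 1 := by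
  have hm : MeasurableSet {y : EuclideanSpace ℝ (Fin d) | ∀ k, y k ∈ Set.Icc (0:ℝ) 1} := by
    have : {y : EuclideanSpace ℝ (Fin d) | ∀ k, y k ∈ Set.Icc (0:ℝ) 1} = ⋂ k, {y : EuclideanSpace ℝ (Fin d) | y k ∈ Set.Icc (0:ℝ) 1} := by ext y; simp
    rw [this]
    exact MeasurableSet.iInter fun k =>
      ((by fun_prop : Measurable fun y : EuclideanSpace ℝ (Fin d) => y k)) measurableSet_Icc
  have h := (PiLp.volume_preserving_toLp (Fin d)).measure_preimage hm.nullMeasurableSet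
  have he : (WithLp.toLp 2 : (Fin d → ℝ) → _) ⁻¹' {y : EuclideanSpace ℝ (Fin d) | ∀ k, y k ∈ Set.Icc (0:ℝ) 1}
      = Set.pi Set.univ fun _ => Set.Icc (0:ℝ) 1 := by
    ext y; simp [Set.mem_pi, Pi.le_def, forall_and]
  rw [he] at h
  rw [← h, volume_pi, Measure.pi_pi]
  simp

theorem prob_isolated_ge (d : ℕ) (hd : 1 ≤ d) (α : ℝ) (hα0 : 0 < α)
    (hα : α < 1 / 2) (n : ℕ) (hn : 0 < n)
    (hlog : Real.log (2 / (3 * α)) ≤ n)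
    (r : ℝ)
    (hr : r = (-Real.log (3 * α / 2) / (2 * unitBallVol d * n)) ^ ((1 : ℝ) / d)) :
    ENNReal.ofReal (3 * α / 2)
      ≤ unifCube d n
          {x | ∀ j : Fin n, j ≠ ⟨0, hn⟩ → ¬ dist (x j) (x ⟨0, hn⟩) ≤ r} := by
  obtain ⟨m, rfl⟩ : ∃ m, n = m + 1 := ⟨n - 1, (Nat.succ_pred_eq_of_pos hn).symm⟩
  set C : Set (EuclideanSpace ℝ (Fin d)) := {y | ∀ k, y k ∈ Set.Icc (0:ℝ) 1} with hCdef
  have hC : MeasurableSet C := by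
    have : C = ⋂ k, {y : EuclideanSpace ℝ (Fin d) | y k ∈ Set.Icc (0:ℝ) 1} := by ext y; simp [hCdef]
    rw [this]
    exact MeasurableSet.iInter fun k =>
      ((by fun_prop : Measurable fun y : EuclideanSpace ℝ (Fin d) => y k)) measurableSet_Icc
  set ν : Measure (EuclideanSpace ℝ (Fin d)) := volume.restrict C with hνdef
  have hνuniv : ν Set.univ = 1 := by
    rw [hνdef, Measure.restrict_apply_univ]; exact cube_vol d
  have hνprob : IsProbabilityMeasure ν := ⟨hνuniv⟩
  -- numbers
  set t : ℝ := -Real.log (3 * α / 2) with htdef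
  have h32pos : (0:ℝ) < 3 * α / 2 := by linarith
  have h32lt : 3 * α / 2 < 1 := by linarith
  have ht : 0 < t := by
    rw [htdef, neg_pos]; exact Real.log_neg h32pos h32lt
  have hlogt : Real.log (2 / (3 * α)) = t := by
    rw [htdef, ← Real.log_inv]
    congr 1
    field_simp
  rw [hlogt] at hlog
  have hV : 0 < unitBallVol d := by
    refine ENNReal.toReal_pos ?_ ?_
    · exact (measure_closedBall_pos volume _ one_pos).ne'
    · exact (measure_closedBall_lt_top).ne
  have hn' : (0:ℝ) < ((m:ℝ) + 1) := by positivity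
  have hbase : 0 ≤ t / (2 * unitBallVol d * ((m:ℕ)+1:ℕ)) := by positivity
  have hrd : r ^ d = t / (2 * unitBallVol d * ((m:ℕ)+1:ℕ)) := by
    rw [hr, ← Real.rpow_natCast (_ ^ ((1:ℝ)/d)) d, ← Real.rpow_mul hbase,
      one_div, inv_mul_cancel₀ (by exact_mod_cast Nat.pos_of_ne_zero (by omega) |>.ne' : (d:ℝ) ≠ 0),
      Real.rpow_one]
  have hr0 : 0 ≤ r := by rw [hr]; positivity
  -- p = unitBallVol d * r ^ d = t / (2*(m+1))
  set p : ℝ := unitBallVol d * r ^ d with hpdef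
  have hpval : p = t / (2 * ((m:ℝ) + 1)) := by
    rw [hpdef, hrd]
    push_cast
    field_simp
  have hp0 : 0 ≤ p := by rw [hpval]; positivity
  have hp2 : p ≤ 1 / 2 := by
    rw [hpval, div_le_div_iff₀ (by positivity) two_pos]
    have : t ≤ (m:ℝ) + 1 := by push_cast at hlog ⊢; linarith
    nlinarith
  -- ball bound
  have ballbound : ∀ x : EuclideanSpace ℝ (Fin d), ν (closedBall x r) ≤ ENNReal.ofReal p := by
    intro x
    refine le_trans (Measure.restrict_le_self _) ?_
    rw [Measure.addHaar_closedBall volume x hr0,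
      ← Measure.addHaar_unitClosedBall_eq_addHaar_unitBall, finrank_euclideanSpace_fin,
      hpdef, mul_comm (unitBallVol d), ENNReal.ofReal_mul (by positivity)]
    gcongr
    rw [unitBallVol, ENNReal.ofReal_toReal measure_closedBall_lt_top.ne]
  -- slice bound
  have slice : ∀ x : EuclideanSpace ℝ (Fin d),
      ENNReal.ofReal ((1 - p) ^ m) ≤ Measure.pi (fun _ : Fin m => ν)
        {y : Fin m → EuclideanSpace ℝ (Fin d) | ∀ j, ¬ dist (y j) x ≤ r} := by
    intro x
    have hset : {y : Fin m → EuclideanSpace ℝ (Fin d) | ∀ j, ¬ dist (y j) x ≤ r}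
        = Set.pi Set.univ (fun _ : Fin m => {z : EuclideanSpace ℝ (Fin d) | ¬ dist z x ≤ r}) := by
      ext y; simp [Set.mem_pi]
    rw [hset, Measure.pi_pi]
    have hone : ENNReal.ofReal (1 - p) ≤ ν {z : EuclideanSpace ℝ (Fin d) | ¬ dist z x ≤ r} := by
      have hcompl : {z : EuclideanSpace ℝ (Fin d) | ¬ dist z x ≤ r} = (closedBall x r)ᶜ := by
        ext z; simp [Metric.mem_closedBall]
      rw [hcompl, measure_compl measurableSet_closedBall (measure_ne_top ν _), hνuniv]
      rw [ENNReal.ofReal_sub _ hp0, ENNReal.ofReal_one]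
      exact tsub_le_tsub_left (ballbound x) 1
    calc ENNReal.ofReal ((1 - p) ^ m)
        = (ENNReal.ofReal (1 - p)) ^ m := ENNReal.ofReal_pow (by linarith) m
      _ ≤ ∏ _j : Fin m, ν {z : EuclideanSpace ℝ (Fin d) | ¬ dist z x ≤ r} := by
          rw [Finset.prod_const, Finset.card_univ, Fintype.card_fin]
          exact pow_le_pow_left' hone m
  -- rewrite the measure
  have hunif : unifCube d (m+1) = Measure.pi (fun _ : Fin (m+1) => ν) := by
    rw [unifCube, hνdef]
    have hbox : {x : Fin (m+1) → EuclideanSpace ℝ (Fin d) | ∀ i, ∀ k, x i k ∈ Set.Icc (0 : ℝ) 1}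
        = Set.pi Set.univ (fun _ : Fin (m+1) => C) := by
      ext x; simp [hCdef, Set.mem_pi]
    rw [hbox, volume_pi, pi_restrict_eq _ _ (fun _ => hC)]
  set T : Set (EuclideanSpace ℝ (Fin d) × (Fin m → EuclideanSpace ℝ (Fin d))) := {q | ∀ j : Fin m, ¬ dist (q.2 j) q.1 ≤ r} with hTdef
  have hT : MeasurableSet T := by
    have : T = ⋂ j : Fin m, {q : EuclideanSpace ℝ (Fin d) × (Fin m → EuclideanSpace ℝ (Fin d)) | ¬ dist (q.2 j) q.1 ≤ r} := by
      ext q; simp [hTdef]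
    rw [this]
    refine MeasurableSet.iInter fun j => ?_
    have hmeas : Measurable fun q : EuclideanSpace ℝ (Fin d) × (Fin m → EuclideanSpace ℝ (Fin d)) => dist (q.2 j) q.1 :=
      (Continuous.dist ((continuous_apply j).comp continuous_snd) continuous_fst).measurable
    exact (hmeas measurableSet_Iic).compl
  have hpres := measurePreserving_piFinSuccAbove (fun _ : Fin (m+1) => ν) 0
  have hSeq : {x : Fin (m+1) → EuclideanSpace ℝ (Fin d) | ∀ j : Fin (m+1), j ≠ ⟨0, hn⟩ → ¬ dist (x j) (x ⟨0, hn⟩) ≤ r}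
      = (MeasurableEquiv.piFinSuccAbove (fun _ : Fin (m+1) => EuclideanSpace ℝ (Fin d)) 0) ⁻¹' T := by
    ext x
    simp only [Set.mem_setOf_eq, Set.mem_preimage, MeasurableEquiv.piFinSuccAbove_apply, hTdef]
    have h0 : (⟨0, hn⟩ : Fin (m+1)) = 0 := rfl
    rw [h0]
    constructor
    · intro h j
      simpa [Fin.zero_succAbove, Fin.tail] using h j.succ (Fin.succ_ne_zero j)
    · intro h j hj
      obtain ⟨i, rfl⟩ := Fin.exists_succ_eq.mpr hj
      simpa [Fin.zero_succAbove, Fin.tail] using h i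
  rw [hunif, hSeq, hpres.measure_preimage hT.nullMeasurableSet,
    Measure.prod_apply hT]
  have hint : ∀ x : EuclideanSpace ℝ (Fin d), ENNReal.ofReal ((1 - p) ^ m) ≤
      Measure.pi (fun _ : Fin m => ν) (Prod.mk x ⁻¹' T) := by
    intro x
    have : Prod.mk x ⁻¹' T = {y : Fin m → EuclideanSpace ℝ (Fin d) | ∀ j, ¬ dist (y j) x ≤ r} := rfl
    rw [this]
    exact slice x
  calc ENNReal.ofReal (3 * α / 2)
      ≤ ENNReal.ofReal ((1 - p) ^ m) := by
        apply ENNReal.ofReal_le_ofReal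
        have h1 : 3 * α / 2 = Real.exp (-t) := by
          rw [htdef, neg_neg, Real.exp_log h32pos]
        rw [h1, hpval]
        have := exp_neg_le_pow t ht (m+1) (Nat.succ_pos m) (by push_cast at hlog ⊢; linarith) m (Nat.le_succ m)
        convert this using 3
        push_cast; ring
    _ = ∫⁻ _x, ENNReal.ofReal ((1 - p) ^ m) ∂ν := by
        rw [lintegral_const, hνuniv, mul_one]
    _ ≤ ∫⁻ x, Measure.pi (fun _ : Fin m => ν) (Prod.mk x ⁻¹' T) ∂ν :=
        lintegral_mono fun x => hint x
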